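/- For the cyclic group C₄ = ⟨(1,2,3,4)⟩ acting on Z⁴ by cyclically permuting coordinates, every point of the form (1+m, −m, m, −m)ᵗ with m ∈ Z is a core point, and distinct values of m give points that are pairwise not translation equivalent. -/

import Mathlib

/-- The orbit of `z ∈ ℝ⁴` under the cyclic group `C₄` generated by the 4-cycle. -/
def c4Orbit (z : Fin 4 → ℝ) : Set (Fin 4 → ℝ) :=
  {x | ∃ k : ℕ, x = z ∘ ⇑((finRotate 4) ^ k)}

private lemma rot_pow_mod (k : ℕ) : (finRotate 4)^k = (finRotate 4)^(k % 4) := by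
  conv_lhs => rw [← Nat.div_add_mod k 4, pow_add, pow_mul]
  simp [show (finRotate 4)^4 = 1 by decide]

private lemma hull_fin4 {v : Fin 4 → (Fin 4 → ℝ)} {x : Fin 4 → ℝ}
    (hx : x ∈ convexHull ℝ (Set.range v)) :
    ∃ w : Fin 4 → ℝ, (∀ i, 0 ≤ w i) ∧ ∑ i, w i = 1 ∧ ∑ i, w i • v i = x := by
  rw [convexHull_range_eq_exists_affineCombination] at hx
  obtain ⟨s, w, hw0, hw1, hx⟩ := hx
  refine ⟨fun i => if i ∈ s then w i else 0, ?_, ?_, ?_⟩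
  · intro i; dsimp only; split_ifs with h; exacts [hw0 i h, le_rfl]
  · rw [Finset.sum_ite_mem, Finset.univ_inter, hw1]
  · rw [Finset.affineCombination_eq_linear_combination s v w hw1] at hx
    rw [← hx]
    simp [ite_smul, Finset.sum_ite_mem]

/-- For every `m ∈ ℤ`, the point `(1+m, −m, m, −m)ᵗ` is a core point for
`C₄` acting on `ℤ⁴` by cyclic coordinate permutation, and distinct values of `m` give
points that are not translation equivalent (their difference is not an integer multiple of
the all-ones vector). -/
theorem stmt_12 :
    (∀ m : ℤ,
      convexHull ℝ (c4Orbit ![1 + (m : ℝ), -(m : ℝ), (m : ℝ), -(m : ℝ)]) ∩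
          {x : Fin 4 → ℝ | ∀ i, ∃ k : ℤ, x i = (k : ℝ)} =
        c4Orbit ![1 + (m : ℝ), -(m : ℝ), (m : ℝ), -(m : ℝ)]) ∧
    ∀ m m' : ℤ, m ≠ m' → ∀ t : ℤ,
      (![1 + (m : ℝ), -(m : ℝ), (m : ℝ), -(m : ℝ)] -
        ![1 + (m' : ℝ), -(m' : ℝ), (m' : ℝ), -(m' : ℝ)]) ≠ fun _ => (t : ℝ) := by
  constructor
  · intro m
    set z : Fin 4 → ℝ := ![1 + (m : ℝ), -(m : ℝ), (m : ℝ), -(m : ℝ)] with hzdef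
    set M : Fin 4 → Fin 4 → ℝ :=
      ![![1 + (m : ℝ), -(m : ℝ), (m : ℝ), -(m : ℝ)],
        ![-(m : ℝ), (m : ℝ), -(m : ℝ), 1 + (m : ℝ)],
        ![(m : ℝ), -(m : ℝ), 1 + (m : ℝ), -(m : ℝ)],
        ![-(m : ℝ), 1 + (m : ℝ), -(m : ℝ), (m : ℝ)]] with hMdef
    have hveq : ∀ k : Fin 4, z ∘ ⇑((finRotate 4)^(k : ℕ)) = M k := by
      intro k; funext i; fin_cases k <;> fin_cases i <;> rfl
    have orbit_eq : c4Orbit z = Set.range M := by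
      ext x; constructor
      · rintro ⟨k, rfl⟩
        refine ⟨⟨k % 4, by omega⟩, ?_⟩
        rw [← hveq ⟨k % 4, by omega⟩]
        rw [rot_pow_mod k]
      · rintro ⟨k, rfl⟩
        exact ⟨(k : ℕ), by rw [hveq k]⟩
    rw [orbit_eq]
    ext x
    constructor
    · rintro ⟨hx, hint⟩
      obtain ⟨w, hw0, hw1, hwx⟩ := hull_fin4 hx
      have hsum : w 0 + w 1 + w 2 + w 3 = 1 := by
        rw [← Fin.sum_univ_four w]; exact hw1
      have hxi : ∀ i, x i = w 0 * M 0 i + w 1 * M 1 i + w 2 * M 2 i + w 3 * M 3 i := by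
        intro i
        rw [← hwx]
        simp [Fin.sum_univ_four]
      have h0 : x 0 = w 0 * (1 + m) + w 1 * (-m) + w 2 * m + w 3 * (-m) := by
        rw [hxi 0, hMdef]; rfl
      have h1 : x 1 = w 0 * (-m) + w 1 * m + w 2 * (-m) + w 3 * (1 + m) := by
        rw [hxi 1, hMdef]; rfl
      have h2 : x 2 = w 0 * m + w 1 * (-m) + w 2 * (1 + m) + w 3 * (-m) := by
        rw [hxi 2, hMdef]; rfl
      have h3 : x 3 = w 0 * (-m) + w 1 * (1 + m) + w 2 * (-m) + w 3 * m := by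
        rw [hxi 3, hMdef]; rfl
      obtain ⟨k0, hk0⟩ := hint 0
      obtain ⟨k1, hk1⟩ := hint 1
      obtain ⟨k2, hk2⟩ := hint 2
      obtain ⟨k3, hk3⟩ := hint 3
      have hd02 : ((k0 - k2 : ℤ) : ℝ) = w 0 - w 2 := by
        push_cast; rw [← hk0, ← hk2, h0, h2]; ring
      have hd31 : ((k1 - k3 : ℤ) : ℝ) = w 3 - w 1 := by
        push_cast; rw [← hk1, ← hk3, h1, h3]; ring
      have hw00 := hw0 0; have hw01 := hw0 1; have hw02 := hw0 2; have hw03 := hw0 3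
      have hcase02 : k0 - k2 = -1 ∨ k0 - k2 = 0 ∨ k0 - k2 = 1 := by
        have hl : (-1 : ℝ) ≤ ((k0 - k2 : ℤ) : ℝ) := by rw [hd02]; linarith
        have hr : ((k0 - k2 : ℤ) : ℝ) ≤ 1 := by rw [hd02]; linarith
        have hl' : (-1 : ℤ) ≤ k0 - k2 := by exact_mod_cast hl
        have hr' : k0 - k2 ≤ 1 := by exact_mod_cast hr
        omega
      rcases hcase02 with hc | hc | hc
      · -- w 2 = 1, x = M 2
        rw [hc] at hd02
        have e0 : w 0 = 0 := by push_cast at hd02; linarith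
        have e2 : w 2 = 1 := by push_cast at hd02; linarith
        have e1 : w 1 = 0 := by linarith
        have e3 : w 3 = 0 := by linarith
        refine ⟨2, ?_⟩
        funext i
        rw [hxi i, e0, e1, e2, e3]; ring
      · -- middle : look at coordinates 1 and 3
        rw [hc] at hd02
        have e02 : w 0 = w 2 := by push_cast at hd02; linarith
        have hcase13 : k1 - k3 = -1 ∨ k1 - k3 = 0 ∨ k1 - k3 = 1 := by
          have hl : (-1 : ℝ) ≤ ((k1 - k3 : ℤ) : ℝ) := by rw [hd31]; linarith
          have hr : ((k1 - k3 : ℤ) : ℝ) ≤ 1 := by rw [hd31]; linarith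
          have hl' : (-1 : ℤ) ≤ k1 - k3 := by exact_mod_cast hl
          have hr' : k1 - k3 ≤ 1 := by exact_mod_cast hr
          omega
        rcases hcase13 with hc' | hc' | hc'
        · rw [hc'] at hd31
          have e1 : w 1 = 1 := by push_cast at hd31; linarith
          have e3 : w 3 = 0 := by push_cast at hd31; linarith
          have e0 : w 0 = 0 := by linarith
          have e2 : w 2 = 0 := by linarith
          refine ⟨1, ?_⟩
          funext i
          rw [hxi i, e0, e1, e2, e3]; ring
        · -- contradiction : x 0 + x 1 = 1/2
          exfalso
          rw [hc'] at hd31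
          have e13 : w 3 = w 1 := by push_cast at hd31; linarith
          have habs : ((k0 + k1 : ℤ) : ℝ) = 1 / 2 := by
            push_cast
            rw [← hk0, ← hk1, h0, h1]
            nlinarith [hsum, e02, e13]
          have : (2 * (k0 + k1) : ℤ) = 1 := by
            have : (2 : ℝ) * ((k0 + k1 : ℤ) : ℝ) = 1 := by rw [habs]; ring
            exact_mod_cast this
          omega
        · rw [hc'] at hd31
          have e3 : w 3 = 1 := by push_cast at hd31; linarith
          have e1 : w 1 = 0 := by push_cast at hd31; linarith
          have e0 : w 0 = 0 := by linarith
          have e2 : w 2 = 0 := by linarith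
          refine ⟨3, ?_⟩
          funext i
          rw [hxi i, e0, e1, e2, e3]; ring
      · rw [hc] at hd02
        have e0 : w 0 = 1 := by push_cast at hd02; linarith
        have e2 : w 2 = 0 := by push_cast at hd02; linarith
        have e1 : w 1 = 0 := by linarith
        have e3 : w 3 = 0 := by linarith
        refine ⟨0, ?_⟩
        funext i
        rw [hxi i, e0, e1, e2, e3]; ring
    · rintro ⟨j, rfl⟩
      refine ⟨subset_convexHull ℝ _ ⟨j, rfl⟩, ?_⟩
      intro i
      have hint' : ∀ r : ℝ, (r = 1 + m ∨ r = -m ∨ r = m) → ∃ k : ℤ, r = k := by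
        rintro r (rfl | rfl | rfl)
        exacts [⟨1 + m, by push_cast; ring⟩, ⟨-m, by norm_num⟩, ⟨m, by norm_num⟩]
      apply hint'
      fin_cases j <;> fin_cases i <;> norm_num [hMdef]
  · intro m m' hmm t h
    have h0 := congrFun h 0
    have h1 := congrFun h 1
    simp [Pi.sub_apply] at h0 h1
    apply hmm
    have : (m : ℝ) = m' := by linarith
    exact_mod_cast this
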